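/- Let n, k, ν, L ∈ ℕ with k < n, a = (ν+L+1)n, b = νn+k, and let 𝔥 be the submatrix of X^b (X the a×a lower bidiagonal 1-matrix over ℤ) given by the rows in I = ⋃_{j=0}^{L} {(ν+j)n+k+1, …, (ν+j+1)n}. If p is a prime with p > C(νn+k, ⌊(νn+k)/2⌋)^{(n−k)(L+1)} · ((n−k)(L+1))^{(n−k)(L+1)/2}, then every full-size minor of 𝔥 whose column indices satisfy j_{(n−k)s+1} > sn and j_{(n−k)s} ≤ sn + νn for s = 1,…,L is nonzero modulo p. -/

import Mathlib

/-- The `a × a` lower bidiagonal matrix over `ℤ` with 1's on the main diagonal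
and on the first subdiagonal. -/
def Xmat (a : ℕ) : Matrix (Fin a) (Fin a) ℤ :=
  fun i j => if (i : ℕ) = (j : ℕ) ∨ (i : ℕ) = (j : ℕ) + 1 then 1 else 0

/-- The index criterion on columns (Lemma `index`), stated 0-based. -/
def colCond (n k ν L : ℕ) {A Nc : ℕ} (j : Fin A → Fin Nc) : Prop :=
  ∀ l : Fin A, ∀ s : ℕ, 1 ≤ s → s ≤ L →
    ((l : ℕ) = (n - k) * s → s * n ≤ (j l : ℕ)) ∧
    ((l : ℕ) + 1 = (n - k) * s → (j l : ℕ) < s * n + ν * n)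

/-- The `l`-th element (0-based) of the row index set
`I = ⋃_{x=0}^{L} {(ν+x)n+k+1, …, (ν+x+1)n}` (1-based values), viewed as a
0-based index into `{0, …, (ν+L+1)n - 1}`: `i_l = l + k⌊l/(n-k)⌋ + νn + k`. -/
def rowIdx (n k ν L : ℕ) (hk : k < n) (l : Fin ((n - k) * (L + 1))) :
    Fin ((ν + L + 1) * n) :=
  ⟨(l : ℕ) + k * ((l : ℕ) / (n - k)) + ν * n + k, by
    have h1 : (l : ℕ) < (n - k) * (L + 1) := l.isLt
    have h2 : (l : ℕ) / (n - k) < L + 1 := Nat.div_lt_of_lt_mul h1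
    have h3 : k * ((l : ℕ) / (n - k)) ≤ k * L :=
      Nat.mul_le_mul_left k (Nat.lt_succ_iff.mp h2)
    have h5 : k * (L + 1) = k * L + k := by ring
    have h4 : (n - k) * (L + 1) + (k * L + k) = n * (L + 1) := by
      rw [← h5, ← Nat.add_mul]
      congr 1
      omega
    have h6 : (ν + L + 1) * n = ν * n + n * (L + 1) := by ring
    linarith⟩


open Matrix Finset

lemma smono_gap {A : ℕ} {F : Fin A → ℕ} (hF : ∀ a b : Fin A, a < b → F a < F b) :
    ∀ (d : ℕ) (a b : Fin A), (a : ℕ) + d = (b : ℕ) → F a + d ≤ F b := by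
  intro d
  induction d with
  | zero =>
    intro a b h
    have : a = b := Fin.ext (by omega)
    subst this; omega
  | succ d ih =>
    intro a b h
    have hb' : (a : ℕ) + d < A := by have := b.isLt; omega
    have h1 := ih a ⟨(a : ℕ) + d, hb'⟩ rfl
    have h2 : F ⟨(a : ℕ) + d, hb'⟩ < F b := by
      apply hF
      rw [Fin.lt_def]; simp; omega
    omega

lemma perm_eq_one {A : ℕ} (σ : Equiv.Perm (Fin A)) (hσ : StrictMono σ) : σ = 1 := by
  have key : ∀ (τ : Equiv.Perm (Fin A)), StrictMono τ → ∀ l : Fin A, (l : ℕ) ≤ τ l := by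
    intro τ hτ l
    have hA : 0 < A := l.pos
    have h0 := smono_gap (F := fun x => ((τ x : Fin A) : ℕ))
      (fun a b hab => by exact_mod_cast (Fin.lt_def.mp (hτ (by exact hab))))
      (l : ℕ) ⟨0, hA⟩ l (by simp)
    have h3 : ((τ ⟨0, hA⟩ : Fin A) : ℕ) + (l : ℕ) ≤ ((τ l : Fin A) : ℕ) := by simpa using h0
    omega
  have hinv : StrictMono (σ⁻¹ : Equiv.Perm (Fin A)) := by
    intro x y hxy
    rw [← hσ.lt_iff_lt]
    simpa using hxy
  ext l
  have h1 := key σ hσ l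
  have h2 := key σ⁻¹ hinv (σ l)
  simp only [← Equiv.Perm.mul_apply, inv_mul_cancel, Equiv.Perm.one_apply] at h2
  simp only [Equiv.Perm.coe_one, id_eq]
  omega

def cc (b i j : ℕ) : ℕ := if j ≤ i then b.choose (i - j) else 0

lemma cc_pascal (b i j : ℕ) : cc (b + 1) i j = cc b i j + cc b i (j + 1) := by
  unfold cc
  rcases Nat.lt_trichotomy i j with h | h | h
  · rw [if_neg (by omega), if_neg (by omega), if_neg (by omega)]
  · subst h
    rw [if_pos le_rfl, if_pos le_rfl, if_neg (by omega)]
    simp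
  · rw [if_pos (by omega), if_pos (by omega), if_pos (by omega)]
    have hd : i - j = (i - (j + 1)) + 1 := by omega
    rw [hd, Nat.choose_succ_succ']
    have : i - (j + 1) + 1 = i - j := by omega
    omega

lemma cc_le_middle (b i j : ℕ) : cc b i j ≤ b.choose (b / 2) := by
  unfold cc
  split
  · exact Nat.choose_le_middle _ _
  · positivity

lemma det_one_submatrix {A N : ℕ} (I J : Fin A → Fin N) (hI : StrictMono I)
    (hJ : StrictMono J) :
    ((1 : Matrix (Fin N) (Fin N) ℤ).submatrix I J).det
      = if ∀ l, I l = J l then 1 else 0 := by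
  by_cases h : ∀ l, I l = J l
  · rw [if_pos h]
    have hIJ : I = J := funext h
    subst hIJ
    have : (1 : Matrix (Fin N) (Fin N) ℤ).submatrix I I = 1 := by
      ext l m
      simp [Matrix.one_apply, hI.injective.eq_iff]
    rw [this, Matrix.det_one]
  · rw [if_neg h]
    rw [Matrix.det_apply]
    apply Finset.sum_eq_zero
    intro σ _
    have : ∃ l, I (σ l) ≠ J l := by
      by_contra hc
      push_neg at hc
      have hσm : StrictMono σ := by
        intro a b hab
        have : J a < J b := hJ hab
        rw [← hc a, ← hc b] at this
        exact hI.lt_iff_lt.mp this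
      have : σ = 1 := perm_eq_one σ hσm
      subst this
      exact h (fun l => hc l)
    obtain ⟨l, hl⟩ := this
    have : ∏ i, (1 : Matrix (Fin N) (Fin N) ℤ).submatrix I J (σ i) i = 0 := by
      apply Finset.prod_eq_zero (Finset.mem_univ l)
      simp [Matrix.one_apply, hl]
    rw [this, smul_zero]

lemma Xpow_succ_col {N : ℕ} (b : ℕ) (i j : Fin N) :
    (Xmat N ^ (b + 1)) i j
      = (Xmat N ^ b) i j
        + (if h : (j : ℕ) + 1 < N then (Xmat N ^ b) i ⟨(j : ℕ) + 1, h⟩ else 0) := by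
  rw [pow_succ, Matrix.mul_apply]
  have hsplit : ∀ t : Fin N, (Xmat N ^ b) i t * (Xmat N) t j
      = (if t = j then (Xmat N ^ b) i t else 0)
        + (if (t : ℕ) = (j : ℕ) + 1 then (Xmat N ^ b) i t else 0) := by
    intro t
    simp only [Xmat]
    by_cases h1 : (t : ℕ) = (j : ℕ)
    · have ht : t = j := Fin.ext h1
      subst ht
      rw [if_pos (Or.inl rfl), if_pos rfl, if_neg (by omega)]
      ring
    · by_cases h2 : (t : ℕ) = (j : ℕ) + 1
      · rw [if_pos (Or.inr h2), if_neg (by exact fun ht => h1 (by rw [ht])), if_pos h2]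
        ring
      · rw [if_neg (by tauto), if_neg (by exact fun ht => h1 (by rw [ht])), if_neg h2]
        ring
  rw [Finset.sum_congr rfl (fun t _ => hsplit t), Finset.sum_add_distrib]
  congr 1
  · rw [Finset.sum_ite_eq' Finset.univ j]
    simp
  · by_cases h : (j : ℕ) + 1 < N
    · rw [dif_pos h]
      have heq : ∀ t : Fin N, ((t : ℕ) = (j : ℕ) + 1) = (t = ⟨(j : ℕ) + 1, h⟩) := by
        intro t
        simp [Fin.ext_iff]
      simp_rw [heq]
      rw [Finset.sum_ite_eq' Finset.univ]
      simp
    · rw [dif_neg h]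
      apply Finset.sum_eq_zero
      intro t _
      rw [if_neg]
      have := t.isLt; omega

lemma main_bound {N A : ℕ} (b : ℕ) (I : Fin A → Fin N) (hI : StrictMono I) :
    ∀ (J : Fin A → Fin N), StrictMono J →
      0 ≤ ((Xmat N ^ b).submatrix I J).det ∧
      ((Xmat N ^ b).submatrix I J).det ≤ ∏ l, (cc b (I l) (J l) : ℤ) ∧
      ((∀ l, (J l : ℕ) ≤ (I l : ℕ) ∧ (I l : ℕ) ≤ (J l : ℕ) + b) →
        1 ≤ ((Xmat N ^ b).submatrix I J).det) := by
  induction b with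
  | zero =>
    intro J hJ
    rw [pow_zero, det_one_submatrix I J hI hJ]
    by_cases h : ∀ l, I l = J l
    · rw [if_pos h]
      refine ⟨zero_le_one, ?_, fun _ => le_rfl⟩
      have hc : ∀ l ∈ Finset.univ, (1 : ℤ) ≤ (cc 0 (I l) (J l) : ℤ) := by
        intro l _
        rw [h l]
        unfold cc
        simp
      calc (1 : ℤ) = ∏ _l : Fin A, 1 := by simp
        _ ≤ ∏ l, (cc 0 (I l) (J l) : ℤ) :=
            Finset.prod_le_prod (by intro l _; norm_num) hc
    · rw [if_neg h]
      push_neg at h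
      obtain ⟨l0, hl0⟩ := h
      refine ⟨le_rfl, ?_, ?_⟩
      · apply Finset.prod_nonneg
        intro l _
        positivity
      · intro hcnd
        exfalso
        apply hl0
        apply Fin.ext
        have h1 := (hcnd l0).1
        have h2 := (hcnd l0).2
        omega
  | succ b ih =>
    intro J hJ
    obtain ⟨g, hgt, hgf⟩ : ∃ g : Fin A → Bool → (Fin A → ℤ),
        (∀ m, g m true = fun l =>
          if h : (J m : ℕ) + 1 < N then (Xmat N ^ b) (I l) ⟨(J m : ℕ) + 1, h⟩ else 0) ∧
        (∀ m, g m false = fun l => (Xmat N ^ b) (I l) (J m)) :=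
      ⟨fun m t => cond t
          (fun l => if h : (J m : ℕ) + 1 < N then (Xmat N ^ b) (I l) ⟨(J m : ℕ) + 1, h⟩ else 0)
          (fun l => (Xmat N ^ b) (I l) (J m)),
        fun m => rfl, fun m => rfl⟩
    have hT : (((Xmat N ^ (b + 1)).submatrix I J)ᵀ : Matrix (Fin A) (Fin A) ℤ)
        = fun m => ∑ t : Bool, g m t := by
      funext m l
      have h1 : (∑ t : Bool, g m t) l = g m true l + g m false l := by
        rw [Fintype.sum_bool]
        rfl
      have e1 : g m true l
          = (if h : (J m : ℕ) + 1 < N then (Xmat N ^ b) (I l) ⟨(J m : ℕ) + 1, h⟩ else 0) :=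
        congrFun (hgt m) l
      have e2 : g m false l = (Xmat N ^ b) (I l) (J m) := congrFun (hgf m) l
      show (Xmat N ^ (b + 1)) (I l) (J m) = (∑ t : Bool, g m t) l
      rw [h1, e1, e2, Xpow_succ_col b (I l) (J m)]
      exact add_comm _ _
    have hrowlem : ∀ (ε : Fin A → Bool) (J' : Fin A → Fin N),
        (∀ m, ε m = true → (J m : ℕ) + 1 < N) →
        (∀ m, (J' m : ℕ) = (J m : ℕ) + (if ε m then 1 else 0)) →
        (fun m => g m (ε m)) = fun m l => (Xmat N ^ b) (I l) (J' m) := by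
      intro ε J' hr hJ'v
      funext m l
      cases hεm : ε m
      · rw [hgf m]
        show (Xmat N ^ b) (I l) (J m) = (Xmat N ^ b) (I l) (J' m)
        have he : J m = J' m := Fin.ext (by rw [hJ'v m, hεm]; simp)
        rw [he]
      · rw [hgt m]
        show (if h : (J m : ℕ) + 1 < N then (Xmat N ^ b) (I l) ⟨(J m : ℕ) + 1, h⟩ else 0)
            = (Xmat N ^ b) (I l) (J' m)
        rw [dif_pos (hr m hεm)]
        have he : (⟨(J m : ℕ) + 1, hr m hεm⟩ : Fin N) = J' m :=
          Fin.ext (by rw [hJ'v m, hεm]; simp)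
        rw [he]
    have hterm : ∀ ε : Fin A → Bool,
        Matrix.detRowAlternating (R := ℤ) (fun m => g m (ε m)) = 0 ∨
        ∃ J' : Fin A → Fin N, StrictMono J' ∧
          (∀ m, (J' m : ℕ) = (J m : ℕ) + (if ε m then 1 else 0)) ∧
          Matrix.detRowAlternating (R := ℤ) (fun m => g m (ε m))
            = ((Xmat N ^ b).submatrix I J').det := by
      intro ε
      by_cases hr : ∀ m, ε m = true → (J m : ℕ) + 1 < N
      · have hex : ∃ J' : Fin A → Fin N,
            ∀ m, (J' m : ℕ) = (J m : ℕ) + (if ε m then 1 else 0) := by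
          refine ⟨fun m => if hm : ε m = true then ⟨(J m : ℕ) + 1, hr m hm⟩ else J m, ?_⟩
          intro m
          by_cases hm : ε m = true <;> simp [hm]
        obtain ⟨J', hJ'v⟩ := hex
        have hrow := hrowlem ε J' hr hJ'v
        by_cases hinj : Function.Injective J'
        · right
          refine ⟨J', ?_, hJ'v, ?_⟩
          · intro a c hac
            rw [Fin.lt_def]
            have h1 : (J a : ℕ) < J c := Fin.lt_def.mp (hJ hac)
            have h2 := hJ'v a
            have h3 := hJ'v c
            have hle : (J' a : ℕ) ≤ (J' c : ℕ) := by
              by_cases ha : ε a = true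
              · rw [if_pos ha] at h2
                by_cases hc : ε c = true
                · rw [if_pos hc] at h3; omega
                · rw [if_neg hc] at h3; omega
              · rw [if_neg ha] at h2
                by_cases hc : ε c = true
                · rw [if_pos hc] at h3; omega
                · rw [if_neg hc] at h3; omega
            rcases lt_or_eq_of_le hle with hlt | heq
            · exact hlt
            · exact absurd (hinj (Fin.ext heq)) (ne_of_lt hac)
          · rw [hrow, ← Matrix.det_transpose ((Xmat N ^ b).submatrix I J')]
            rfl
        · left
          rw [Function.not_injective_iff] at hinj
          obtain ⟨a, c, hac, hne⟩ := hinj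
          refine AlternatingMap.map_eq_zero_of_eq _ _ ?_ hne
          have h1 : g a (ε a) = fun l => (Xmat N ^ b) (I l) (J' a) := congrFun hrow a
          have h2 : g c (ε c) = fun l => (Xmat N ^ b) (I l) (J' c) := congrFun hrow c
          rw [h1, h2, hac]
      · left
        push_neg at hr
        obtain ⟨m, hm1, hm2⟩ := hr
        apply MultilinearMap.map_coord_zero
          (f := (Matrix.detRowAlternating (R := ℤ) (n := Fin A)).toMultilinearMap) m
        show g m (ε m) = 0
        rw [hm1, hgt m]
        funext l
        rw [dif_neg (by omega)]
        rfl
    have hdet : ((Xmat N ^ (b + 1)).submatrix I J).det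
        = ∑ ε : Fin A → Bool, Matrix.detRowAlternating (R := ℤ) (fun m => g m (ε m)) := by
      rw [← Matrix.det_transpose]
      show Matrix.detRowAlternating (((Xmat N ^ (b + 1)).submatrix I J)ᵀ) = _
      rw [hT]
      exact (Matrix.detRowAlternating (R := ℤ) (n := Fin A)).toMultilinearMap.map_sum g
    refine ⟨?_, ?_, ?_⟩
    · rw [hdet]
      apply Finset.sum_nonneg
      intro ε _
      rcases hterm ε with h0 | ⟨J', hJ'm, _, heq⟩
      · rw [h0]
      · rw [heq]
        exact (ih J' hJ'm).1
    · rw [hdet]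
      have step1 : ∀ ε : Fin A → Bool,
          Matrix.detRowAlternating (R := ℤ) (fun m => g m (ε m))
            ≤ ∏ l, (cc b (I l) ((J l : ℕ) + (if ε l then 1 else 0)) : ℤ) := by
        intro ε
        rcases hterm ε with h0 | ⟨J', hJ'm, hJ'v, heq⟩
        · rw [h0]
          apply Finset.prod_nonneg
          intro l _
          positivity
        · rw [heq]
          calc ((Xmat N ^ b).submatrix I J').det ≤ ∏ l, (cc b (I l) (J' l) : ℤ) :=
                (ih J' hJ'm).2.1
            _ = ∏ l, (cc b (I l) ((J l : ℕ) + (if ε l then 1 else 0)) : ℤ) := by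
                apply Finset.prod_congr rfl
                intro l _
                rw [hJ'v l]
      have hms := (MultilinearMap.mkPiAlgebra ℤ (Fin A) ℤ).map_sum
        (fun l (t : Bool) => (cc b (I l) ((J l : ℕ) + (if t then 1 else 0)) : ℤ))
      simp only [MultilinearMap.mkPiAlgebra_apply] at hms
      calc (∑ ε : Fin A → Bool, Matrix.detRowAlternating (R := ℤ) (fun m => g m (ε m)))
          ≤ ∑ ε : Fin A → Bool,
              ∏ l, (cc b (I l) ((J l : ℕ) + (if ε l then 1 else 0)) : ℤ) :=
            Finset.sum_le_sum (fun ε _ => step1 ε)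
        _ = ∏ l, ∑ t : Bool, (cc b (I l) ((J l : ℕ) + (if t then 1 else 0)) : ℤ) :=
            hms.symm
        _ = ∏ l, (cc (b + 1) (I l) (J l) : ℤ) := by
            apply Finset.prod_congr rfl
            intro l _
            rw [Fintype.sum_bool]
            simp only [if_true, if_false]
            rw [cc_pascal]
            push_cast
            ring_nf
    · intro hcnd
      obtain ⟨ε, hεt, hεf⟩ : ∃ ε : Fin A → Bool,
          (∀ l, (J l : ℕ) + b < (I l : ℕ) → ε l = true) ∧
          (∀ l, ¬((J l : ℕ) + b < (I l : ℕ)) → ε l = false) :=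
        ⟨fun l => decide ((J l : ℕ) + b < (I l : ℕ)),
          fun l h => by simp [h], fun l h => by simp [h]⟩
      have hεval : ∀ l, (if ε l then 1 else 0) = if (J l : ℕ) + b < (I l : ℕ) then 1 else 0 := by
        intro l
        by_cases hb2 : (J l : ℕ) + b < (I l : ℕ)
        · rw [hεt l hb2, if_pos hb2]
          simp
        · rw [hεf l hb2, if_neg hb2]
          simp
      have hrange : ∀ l, (J l : ℕ) + (if ε l then 1 else 0) < N := by
        clear hdet
        intro l
        have h1 := (hcnd l).1
        have h2 := (hcnd l).2
        have h3 := (I l).isLt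
        rw [hεval l]
        split <;> omega
      obtain ⟨J', hJ'v⟩ : ∃ J' : Fin A → Fin N,
          ∀ m, (J' m : ℕ) = (J m : ℕ) + (if ε m then 1 else 0) :=
        ⟨fun l => ⟨(J l : ℕ) + (if ε l then 1 else 0), hrange l⟩, fun m => rfl⟩
      have hJ'm : StrictMono J' := by
        clear hdet
        intro a c hac
        rw [Fin.lt_def]
        have h1 : (J a : ℕ) < J c := Fin.lt_def.mp (hJ hac)
        have h2 : (I a : ℕ) < I c := Fin.lt_def.mp (hI hac)
        have h3 := (hcnd a).2
        have h4 := (hcnd c).2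
        have h5 := hJ'v a
        have h6 := hJ'v c
        rw [hεval a] at h5
        rw [hεval c] at h6
        by_cases ha : (J a : ℕ) + b < (I a : ℕ)
        · rw [if_pos ha] at h5
          by_cases hc2 : (J c : ℕ) + b < (I c : ℕ)
          · rw [if_pos hc2] at h6; omega
          · rw [if_neg hc2] at h6; omega
        · rw [if_neg ha] at h5
          by_cases hc2 : (J c : ℕ) + b < (I c : ℕ)
          · rw [if_pos hc2] at h6; omega
          · rw [if_neg hc2] at h6; omega
      have hrtrue : ∀ m, ε m = true → (J m : ℕ) + 1 < N := by
        clear hdet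
        intro m hm
        have h5 := hrange m
        rw [hm] at h5
        simpa using h5
      have hrow := hrowlem ε J' hrtrue hJ'v
      have hterm_eq : Matrix.detRowAlternating (R := ℤ) (fun m => g m (ε m))
          = ((Xmat N ^ b).submatrix I J').det := by
        rw [hrow, ← Matrix.det_transpose ((Xmat N ^ b).submatrix I J')]
        rfl
      have hcnd' : ∀ l, (J' l : ℕ) ≤ (I l : ℕ) ∧ (I l : ℕ) ≤ (J' l : ℕ) + b := by
        clear hdet
        intro l
        have h1 := (hcnd l).1
        have h2 := (hcnd l).2
        have h5 := hJ'v l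
        rw [hεval l] at h5
        by_cases hb2 : (J l : ℕ) + b < (I l : ℕ)
        · rw [if_pos hb2] at h5; omega
        · rw [if_neg hb2] at h5; omega
      have hpos : (1 : ℤ) ≤ ((Xmat N ^ b).submatrix I J').det := (ih J' hJ'm).2.2 hcnd'
      rw [hdet]
      have hnneg : ∀ ε' ∈ (Finset.univ : Finset (Fin A → Bool)),
          (0 : ℤ) ≤ Matrix.detRowAlternating (R := ℤ) (fun m => g m (ε' m)) := by
        intro ε' _
        rcases hterm ε' with h0 | ⟨J'', hJ''m, _, heq⟩
        · rw [h0]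
        · rw [heq]
          exact (ih J'' hJ''m).1
      calc (1 : ℤ) ≤ Matrix.detRowAlternating (R := ℤ) (fun m => g m (ε m)) := by
            rw [hterm_eq]; exact hpos
        _ ≤ ∑ ε' : Fin A → Bool, Matrix.detRowAlternating (R := ℤ) (fun m => g m (ε' m)) :=
            Finset.single_le_sum hnneg (Finset.mem_univ ε)

/-- If `p` is a prime with
`p > C(νn+k, ⌊(νn+k)/2⌋)^{(n-k)(L+1)} ((n-k)(L+1))^{(n-k)(L+1)/2}`, then every
full-size minor of the submatrix `𝔥` of `X^b` (rows given by `I`) whose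
column indices satisfy the index conditions is nonzero modulo `p`. -/
theorem minor_ne_zero_mod_p (n k ν L : ℕ) (hk : k < n)
    (p : ℕ) (hp : p.Prime)
    (hpbig : ((Nat.choose (ν * n + k) ((ν * n + k) / 2) : ℝ)) ^ ((n - k) * (L + 1)) *
        (((n - k) * (L + 1) : ℕ) : ℝ) ^ ((((n - k) * (L + 1) : ℕ) : ℝ) / 2) < (p : ℝ))
    (j : Fin ((n - k) * (L + 1)) → Fin ((ν + L + 1) * n)) (hj : StrictMono j)
    (hcond : colCond n k ν L j) :
    ((((Xmat ((ν + L + 1) * n) ^ (ν * n + k)).submatrix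
          (rowIdx n k ν L hk) j).det : ℤ) : ZMod p) ≠ 0 := by
  have hnk : 0 < n - k := by omega
  have hA : 0 < (n - k) * (L + 1) := by positivity
  have hjmono : ∀ a b : Fin ((n - k) * (L + 1)), a < b → (j a : ℕ) < (j b : ℕ) :=
    fun a b hab => Fin.lt_def.mp (hj hab)
  have hI : StrictMono (rowIdx n k ν L hk) := by
    intro a c hac
    rw [Fin.lt_def]
    show (a : ℕ) + k * ((a : ℕ) / (n - k)) + ν * n + k
        < (c : ℕ) + k * ((c : ℕ) / (n - k)) + ν * n + k
    have h1 : (a : ℕ) < (c : ℕ) := Fin.lt_def.mp hac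
    have h3 : k * ((a : ℕ) / (n - k)) ≤ k * ((c : ℕ) / (n - k)) :=
      Nat.mul_le_mul_left k (Nat.div_le_div_right (le_of_lt h1))
    omega
  have hIb : ∀ l : Fin ((n - k) * (L + 1)),
      (j l : ℕ) ≤ (rowIdx n k ν L hk l : ℕ) ∧
      (rowIdx n k ν L hk l : ℕ) ≤ (j l : ℕ) + (ν * n + k) := by
    intro l
    have hIl : (rowIdx n k ν L hk l : ℕ)
        = (l : ℕ) + k * ((l : ℕ) / (n - k)) + ν * n + k := rfl
    obtain ⟨q, hq_eq⟩ : ∃ q, (l : ℕ) / (n - k) = q := ⟨_, rfl⟩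
    obtain ⟨r, hr_eq⟩ : ∃ r, (l : ℕ) % (n - k) = r := ⟨_, rfl⟩
    rw [hq_eq] at hIl
    have hdm : (n - k) * q + r = (l : ℕ) := by
      rw [← hq_eq, ← hr_eq]; exact Nat.div_add_mod _ _
    have hrlt : r < n - k := by rw [← hr_eq]; exact Nat.mod_lt _ hnk
    have hqL : q ≤ L := by
      have h2 : (l : ℕ) / (n - k) < L + 1 := Nat.div_lt_of_lt_mul l.isLt
      omega
    have e1 : (n - k) * q + k * q = n * q := by
      rw [← Nat.add_mul, Nat.sub_add_cancel hk.le]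
    have e1' : n * q = q * n := Nat.mul_comm _ _
    have e2 : (n - k) * (q + 1) = (n - k) * q + (n - k) := Nat.mul_succ _ _
    have e3 : (q + 1) * n = q * n + n := Nat.succ_mul _ _
    have eA : (n - k) * (L + 1) = (n - k) * L + (n - k) := Nat.mul_succ _ _
    have eqL : (n - k) * q ≤ (n - k) * L := Nat.mul_le_mul_left _ hqL
    have hlA : (l : ℕ) < (n - k) * (L + 1) := l.isLt
    constructor
    · -- upper bound : j l ≤ I l
      by_cases hcase : q = L
      · subst hcase
        have hl1A : (n - k) * (q + 1) - 1 < (n - k) * (q + 1) := by omega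
        have hgap := smono_gap hjmono ((n - k) * (q + 1) - 1 - (l : ℕ)) l
          ⟨(n - k) * (q + 1) - 1, hl1A⟩ (by simp; omega)
        have hjtop : (j ⟨(n - k) * (q + 1) - 1, hl1A⟩ : ℕ) < (ν + q + 1) * n :=
          (j _).isLt
        have eN : (ν + q + 1) * n = ν * n + q * n + n := by ring
        omega
      · have hq1L : q + 1 ≤ L := by omega
        have emul : (n - k) * (q + 1) ≤ (n - k) * L := Nat.mul_le_mul_left _ hq1L
        have hl1A : (n - k) * (q + 1) - 1 < (n - k) * (L + 1) := by omega
        have hll1 : (l : ℕ) ≤ (n - k) * (q + 1) - 1 := by omega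
        have hgap := smono_gap hjmono ((n - k) * (q + 1) - 1 - (l : ℕ)) l
          ⟨(n - k) * (q + 1) - 1, hl1A⟩ (by simp; omega)
        have hcnd2 := (hcond ⟨(n - k) * (q + 1) - 1, hl1A⟩ (q + 1) (by omega) hq1L).2
          (by simp; omega)
        omega
    · -- lower bound : I l ≤ j l + b
      by_cases hq0 : q = 0
      · subst hq0
        have hgap := smono_gap hjmono (l : ℕ) ⟨0, hA⟩ l (by simp)
        omega
      · have hl0A : (n - k) * q < (n - k) * (L + 1) := by omega
        have hcnd1 := (hcond ⟨(n - k) * q, hl0A⟩ q (by omega) hqL).1 (by simp)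
        have hgap := smono_gap hjmono ((l : ℕ) - (n - k) * q)
          ⟨(n - k) * q, hl0A⟩ l (by simp; omega)
        omega
  obtain ⟨hD0, hDle, hDpos'⟩ :=
    main_bound (ν * n + k) (rowIdx n k ν L hk) hI j hj
  have hDpos := hDpos' hIb
  have hDub : (((Xmat ((ν + L + 1) * n) ^ (ν * n + k)).submatrix
      (rowIdx n k ν L hk) j).det)
      ≤ (((Nat.choose (ν * n + k) ((ν * n + k) / 2)) ^ ((n - k) * (L + 1)) : ℕ) : ℤ) := by
    refine le_trans hDle ?_
    calc (∏ l, (cc (ν * n + k) (rowIdx n k ν L hk l) (j l) : ℤ))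
        ≤ ∏ _l : Fin ((n - k) * (L + 1)),
            ((Nat.choose (ν * n + k) ((ν * n + k) / 2) : ℕ) : ℤ) := by
          apply Finset.prod_le_prod
          · intro l _; positivity
          · intro l _
            exact_mod_cast cc_le_middle (ν * n + k) (rowIdx n k ν L hk l) (j l)
      _ = (((Nat.choose (ν * n + k) ((ν * n + k) / 2)) ^ ((n - k) * (L + 1)) : ℕ) : ℤ) := by
          rw [Finset.prod_const]
          push_cast
          simp
  have hBAp : ((((Nat.choose (ν * n + k) ((ν * n + k) / 2)) ^ ((n - k) * (L + 1)) : ℕ)) : ℝ)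
      < (p : ℝ) := by
    have h1 : (1 : ℝ) ≤ ((((n - k) * (L + 1) : ℕ)) : ℝ)
        ^ (((((n - k) * (L + 1) : ℕ)) : ℝ) / 2) := by
      rw [← Real.rpow_zero ((((n - k) * (L + 1) : ℕ)) : ℝ)]
      apply Real.rpow_le_rpow_of_exponent_le
      · exact_mod_cast hA
      · positivity
    have h2 : (0 : ℝ) ≤ ((Nat.choose (ν * n + k) ((ν * n + k) / 2) : ℕ) : ℝ)
        ^ ((n - k) * (L + 1)) := by positivity
    calc ((((Nat.choose (ν * n + k) ((ν * n + k) / 2)) ^ ((n - k) * (L + 1)) : ℕ)) : ℝ)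
        = ((Nat.choose (ν * n + k) ((ν * n + k) / 2) : ℕ) : ℝ) ^ ((n - k) * (L + 1)) * 1 := by
          push_cast; ring
      _ ≤ ((Nat.choose (ν * n + k) ((ν * n + k) / 2) : ℕ) : ℝ) ^ ((n - k) * (L + 1))
            * ((((n - k) * (L + 1) : ℕ)) : ℝ) ^ (((((n - k) * (L + 1) : ℕ)) : ℝ) / 2) :=
          mul_le_mul_of_nonneg_left h1 h2
      _ < (p : ℝ) := hpbig
  have hBApN : ((Nat.choose (ν * n + k) ((ν * n + k) / 2)) ^ ((n - k) * (L + 1)) : ℕ) < p := by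
    exact_mod_cast hBAp
  intro hcontra
  rw [ZMod.intCast_zmod_eq_zero_iff_dvd] at hcontra
  have hple : ((p : ℤ)) ≤ (((Xmat ((ν + L + 1) * n) ^ (ν * n + k)).submatrix
      (rowIdx n k ν L hk) j).det) :=
    Int.le_of_dvd (lt_of_lt_of_le zero_lt_one hDpos) hcontra
  have hplt : (((Xmat ((ν + L + 1) * n) ^ (ν * n + k)).submatrix
      (rowIdx n k ν L hk) j).det) < (p : ℤ) :=
    lt_of_le_of_lt hDub (by exact_mod_cast hBApN)
  linarith
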